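/- With G_k^{(d)} and μ_d as above, define A_{2k}^{(d)} = ∫_0^1 x·G_{2k}^{(d)}(x) dμ_d(x) and B_{2k+1}^{(d)} = ∫_0^1 G_{2k+1}^{(d)}(x) dμ_d(x). Then A_0^{(d)} = Z_d/(d-1), A_{2k}^{(d)} = (-1)^{k+1} Z_d (2k-3)!!/∏_{j=0}^{k}(d+2j-1) for k ≥ 1, and B_{2k+1}^{(d)} = (-1)^k Z_d (2k-1)!!/∏_{j=0}^{k}(d+2j-1) for k ≥ 0. -/

import Mathlib

open scoped Nat
open MeasureTheory

noncomputable def geg (d : ℕ) : ℕ → ℝ → ℝ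
  | 0, _ => 1
  | 1, x => x
  | (k + 2), x =>
      (((d : ℝ) + 2 * (k + 2) - 4) / ((d : ℝ) + (k + 2) - 3)) * x * geg d (k + 1) x
        - (((k : ℝ) + 1) / ((d : ℝ) + (k + 2) - 3)) * geg d k x

/-- The normalizing constant `Z_d = Γ(d/2)/(√π·Γ((d-1)/2))` of the measure `μ_d`. -/
noncomputable def Zc (d : ℕ) : ℝ :=
  Real.Gamma ((d : ℝ) / 2) / (Real.sqrt Real.pi * Real.Gamma (((d : ℝ) - 1) / 2))

/-- `A_{2k}^{(d)} = ∫_0^1 x·G_{2k}^{(d)}(x) dμ_d(x)` where `dμ_d = Z_d (1-x²)^{(d-3)/2} dx`. -/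
noncomputable def Ageg (d k : ℕ) : ℝ :=
  ∫ x in (0:ℝ)..1, x * geg d (2 * k) x * (Zc d * (1 - x ^ 2) ^ (((d : ℝ) - 3) / 2))

/-- `B_{2k+1}^{(d)} = ∫_0^1 G_{2k+1}^{(d)}(x) dμ_d(x)`. -/
noncomputable def Bgeg (d k : ℕ) : ℝ :=
  ∫ x in (0:ℝ)..1, geg d (2 * k + 1) x * (Zc d * (1 - x ^ 2) ^ (((d : ℝ) - 3) / 2))

noncomputable def dgeg (d : ℕ) : ℕ → ℝ → ℝ
  | 0, _ => 0
  | 1, _ => 1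
  | (k + 2), x =>
      (((d : ℝ) + 2 * (k + 2) - 4) / ((d : ℝ) + (k + 2) - 3)) *
          (geg d (k + 1) x + x * dgeg d (k + 1) x)
        - (((k : ℝ) + 1) / ((d : ℝ) + (k + 2) - 3)) * dgeg d k x

lemma geg_hasDerivAt (d : ℕ) : ∀ n : ℕ, ∀ x : ℝ, HasDerivAt (geg d n) (dgeg d n x) x := by
  have key : ∀ n : ℕ, (∀ x : ℝ, HasDerivAt (geg d n) (dgeg d n x) x) ∧
      (∀ x : ℝ, HasDerivAt (geg d (n + 1)) (dgeg d (n + 1) x) x) := by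
    intro n
    induction n with
    | zero =>
      constructor
      · intro x; simpa [geg, dgeg] using (hasDerivAt_const x (1 : ℝ))
      · intro x; simpa [geg, dgeg] using (hasDerivAt_id' x)
    | succ k ih =>
      refine ⟨ih.2, fun x => ?_⟩
      have h1 := ih.1 x
      have h2 := ih.2 x
      have hfun : geg d (k + 2) = fun y : ℝ =>
          (((d : ℝ) + 2 * (k + 2) - 4) / ((d : ℝ) + (k + 2) - 3)) * (y * geg d (k + 1) y)
            - (((k : ℝ) + 1) / ((d : ℝ) + (k + 2) - 3)) * geg d k y := by
        funext y; show geg d (k + 2) y = _; simp [geg]; ring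
      have : HasDerivAt (fun y : ℝ =>
          (((d : ℝ) + 2 * (k + 2) - 4) / ((d : ℝ) + (k + 2) - 3)) * (y * geg d (k + 1) y)
            - (((k : ℝ) + 1) / ((d : ℝ) + (k + 2) - 3)) * geg d k y)
          ((((d : ℝ) + 2 * (k + 2) - 4) / ((d : ℝ) + (k + 2) - 3)) *
            (1 * geg d (k + 1) x + x * dgeg d (k + 1) x)
          - (((k : ℝ) + 1) / ((d : ℝ) + (k + 2) - 3)) * dgeg d k x) x := by
        have hmul : HasDerivAt (fun x : ℝ => x * geg d (k + 1) x)
            (1 * geg d (k + 1) x + x * dgeg d (k + 1) x) x := (hasDerivAt_id x).mul h2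
        exact (hmul.const_mul _).sub (h1.const_mul _)
      have e : dgeg d (k + 2) x = (((d : ℝ) + 2 * (k + 2) - 4) / ((d : ℝ) + (k + 2) - 3)) *
            (1 * geg d (k + 1) x + x * dgeg d (k + 1) x)
          - (((k : ℝ) + 1) / ((d : ℝ) + (k + 2) - 3)) * dgeg d k x := by
        simp [dgeg]
      rw [hfun, e]; exact this
  exact fun n => (key n).1

lemma geg_continuous (d n : ℕ) : Continuous (geg d n) := by
  have : Differentiable ℝ (geg d n) := fun x => (geg_hasDerivAt d n x).differentiableAt
  exact this.continuous

/-- the recurrence, cleared of denominators, for index m+1 with m ≥ 1 -/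
lemma geg_rec (d : ℕ) (hd : 2 ≤ d) (m : ℕ) (hm : 1 ≤ m) (x : ℝ) :
    ((d : ℝ) + m - 2) * geg d (m + 1) x
      = ((d : ℝ) + 2 * m - 2) * (x * geg d m x) - (m : ℝ) * geg d (m - 1) x := by
  obtain ⟨j, rfl⟩ : ∃ j, m = j + 1 := ⟨m - 1, by omega⟩
  have hne : ((d : ℝ) + (↑j + 2) - 3) ≠ 0 := by
    have : (2 : ℝ) ≤ (d : ℝ) := by exact_mod_cast hd
    nlinarith [Nat.cast_nonneg (α := ℝ) j]
  show ((d : ℝ) + ↑(j + 1) - 2) * geg d (j + 2) x = _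
  simp only [geg, Nat.add_sub_cancel]
  push_cast at hne ⊢
  field_simp
  ring

lemma geg_deriv_id (d : ℕ) (hd : 2 ≤ d) : ∀ n : ℕ, ∀ x : ℝ,
    (1 - x ^ 2) * dgeg d n x = (n : ℝ) * (geg d (n - 1) x - x * geg d n x) := by
  have hd2 : (2 : ℝ) ≤ (d : ℝ) := by exact_mod_cast hd
  have P1 : ∀ x : ℝ, (1 - x ^ 2) * dgeg d 1 x = (1 : ℝ) * (geg d 0 x - x * geg d 1 x) := by
    intro x; simp [geg, dgeg]; ring
  have P2 : ∀ x : ℝ, (1 - x ^ 2) * dgeg d 2 x = (2 : ℝ) * (geg d 1 x - x * geg d 2 x) := by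
    intro x
    have hne : ((d : ℝ) - 1) ≠ 0 := by nlinarith
    have hne' : (-1 : ℝ) + (d : ℝ) ≠ 0 := by nlinarith
    show (1 - x ^ 2) * dgeg d (0 + 2) x = (2 : ℝ) * (geg d 1 x - x * geg d (0 + 2) x)
    simp only [geg, dgeg]
    push_cast
    have hi : ((-1 : ℝ) + (d : ℝ)) * ((-1 : ℝ) + (d : ℝ))⁻¹ = 1 := mul_inv_cancel₀ hne'
    field_simp
    linear_combination (2 * x) * hi
  have key : ∀ n : ℕ,
      (∀ x : ℝ, (1 - x ^ 2) * dgeg d (n + 1) x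
          = ((n : ℝ) + 1) * (geg d n x - x * geg d (n + 1) x)) ∧
      (∀ x : ℝ, (1 - x ^ 2) * dgeg d (n + 2) x
          = ((n : ℝ) + 2) * (geg d (n + 1) x - x * geg d (n + 2) x)) := by
    intro n
    induction n with
    | zero =>
      refine ⟨fun x => by simpa using P1 x, fun x => by simpa using P2 x⟩
    | succ k ih =>
      refine ⟨fun x => by have h := ih.2 x; push_cast at h ⊢; linear_combination h, fun x => ?_⟩
      have h0 := ih.1 x
      have h1 := ih.2 x
      have hrec := geg_rec d hd (k + 1) (by omega) x
      have hne : ((d : ℝ) + k) ≠ 0 := by nlinarith [Nat.cast_nonneg (α := ℝ) k]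
      have e3 : geg d (k + 3) x = (((d : ℝ) + 2 * k + 2) / ((d : ℝ) + k)) * (x * geg d (k + 2) x)
          - (((k : ℝ) + 2) / ((d : ℝ) + k)) * geg d (k + 1) x := by
        show geg d (k + 1 + 2) x = _
        simp only [geg]; push_cast; ring_nf
      have e3' : dgeg d (k + 3) x = (((d : ℝ) + 2 * k + 2) / ((d : ℝ) + k)) *
            (geg d (k + 2) x + x * dgeg d (k + 2) x)
          - (((k : ℝ) + 2) / ((d : ℝ) + k)) * dgeg d (k + 1) x := by
        show dgeg d (k + 1 + 2) x = _
        simp only [dgeg]; push_cast; ring_nf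
      push_cast at hrec h0 h1 ⊢
      rw [show (k : ℕ) + 1 + 2 = k + 3 from rfl, e3, e3']
      field_simp
      linear_combination (((d : ℝ) + 2 * k + 2) * x) * h1 - ((k : ℝ) + 2) * h0 - ((k : ℝ) + 2) * hrec
  intro n x
  match n with
  | 0 => simp [dgeg]
  | (m + 1) => simpa using (key m).1 x

lemma rpow_meas (e : ℝ) : Measurable (fun y : ℝ => y ^ e) := by
  apply measurable_of_continuousOn_compl_singleton (0 : ℝ)
  intro y hy
  have hy' : y ≠ 0 := by simpa using hy
  exact ((Real.continuousAt_rpow_const y e (Or.inl hy')).continuousWithinAt)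

lemma intW (d : ℕ) (hd : 2 ≤ d) (p : ℝ → ℝ) (hp : Continuous p) :
    IntervalIntegrable (fun x => p x * (1 - x ^ 2) ^ (((d : ℝ) - 3) / 2)) volume 0 1 := by
  rcases eq_or_lt_of_le hd with h2 | h3
  · -- d = 2
    subst h2
    have he : (((2 : ℕ) : ℝ) - 3) / 2 = (-(1 / 2) : ℝ) := by norm_num
    rw [he]
    have hbase : IntervalIntegrable (fun x : ℝ => x ^ (-(1 / 2) : ℝ)) volume 0 1 :=
      intervalIntegral.intervalIntegrable_rpow' (by norm_num)
    have h1 : IntervalIntegrable (fun x : ℝ => (1 - x) ^ (-(1 / 2) : ℝ)) volume 0 1 := by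
      have := hbase.comp_sub_left 1
      simpa using this.symm
    obtain ⟨C, hC⟩ := (isCompact_Icc (a := (0 : ℝ)) (b := 1)).exists_bound_of_continuousOn
      hp.continuousOn
    have hC0 : 0 ≤ C := le_trans (norm_nonneg (p 0)) (hC 0 (by norm_num))
    refine (h1.const_mul C).mono_fun ?_ ?_
    · exact ((hp.measurable.mul ((rpow_meas _).comp
        (measurable_const.sub (measurable_id.pow_const 2)))).aestronglyMeasurable)
    · rw [Set.uIoc_of_le (by norm_num : (0:ℝ) ≤ 1)]
      refine (MeasureTheory.ae_restrict_iff' measurableSet_Ioc).2 (Filter.Eventually.of_forall ?_)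
      intro x hx
      obtain ⟨hx0, hx1⟩ := hx
      have hb0 : (0 : ℝ) ≤ 1 - x ^ 2 := by nlinarith
      have hb0' : (0 : ℝ) ≤ 1 - x := by nlinarith
      have key : (1 - x ^ 2) ^ (-(1 / 2) : ℝ) ≤ (1 - x) ^ (-(1 / 2) : ℝ) := by
        rcases eq_or_lt_of_le hx1 with rfl | hlt
        · norm_num
        · exact Real.rpow_le_rpow_of_nonpos (by nlinarith) (by nlinarith) (by norm_num)
      have hpx : |p x| ≤ C := hC x ⟨le_of_lt hx0, hx1⟩
      have : ‖p x * (1 - x ^ 2) ^ (-(1 / 2) : ℝ)‖ = |p x| * (1 - x ^ 2) ^ (-(1 / 2) : ℝ) := by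
        rw [norm_mul]
        simp [abs_of_nonneg (Real.rpow_nonneg hb0 _)]
      dsimp only
      rw [this]
      calc |p x| * (1 - x ^ 2) ^ (-(1 / 2) : ℝ) ≤ C * (1 - x) ^ (-(1 / 2) : ℝ) := by
            apply mul_le_mul hpx key (Real.rpow_nonneg hb0 _) hC0
        _ ≤ ‖C * (1 - x) ^ (-(1 / 2) : ℝ)‖ := le_abs_self _
  · -- 3 ≤ d
    have he : (0 : ℝ) ≤ ((d : ℝ) - 3) / 2 := by
      have : (3 : ℝ) ≤ (d : ℝ) := by exact_mod_cast h3
      linarith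
    have hw : Continuous (fun x : ℝ => (1 - x ^ 2) ^ (((d : ℝ) - 3) / 2)) := by
      rw [continuous_iff_continuousAt]
      intro x
      exact (Real.continuousAt_rpow_const _ _ (Or.inr he)).comp
        ((continuous_const.sub (continuous_pow 2)).continuousAt)
    exact (hp.mul hw).intervalIntegrable _ _

lemma key_ftc (d : ℕ) (hd : 2 ≤ d) (n : ℕ) :
    (n : ℝ) * (∫ x in (0:ℝ)..1, geg d (n - 1) x * (1 - x ^ 2) ^ (((d : ℝ) - 3) / 2))
      - ((d : ℝ) + n - 1) * (∫ x in (0:ℝ)..1, x * geg d n x * (1 - x ^ 2) ^ (((d : ℝ) - 3) / 2))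
    = - geg d n 0 := by
  have hd2 : (2 : ℝ) ≤ (d : ℝ) := by exact_mod_cast hd
  set e : ℝ := ((d : ℝ) - 3) / 2 with he
  have hE : e + 1 ≠ 0 := by rw [he]; intro h; nlinarith
  have hE0 : (0 : ℝ) ≤ e + 1 := by rw [he]; nlinarith
  set F : ℝ → ℝ := fun x => geg d n x * (1 - x ^ 2) ^ (e + 1) with hF
  set g : ℝ → ℝ := fun x =>
    ((n : ℝ) * geg d (n - 1) x - ((d : ℝ) + n - 1) * (x * geg d n x)) * (1 - x ^ 2) ^ e with hg
  have hWcont : Continuous (fun x : ℝ => (1 - x ^ 2) ^ (e + 1)) := by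
    rw [continuous_iff_continuousAt]
    intro x
    exact (Real.continuousAt_rpow_const _ _ (Or.inr hE0)).comp
      ((continuous_const.sub (continuous_pow 2)).continuousAt)
  have hFcont : ContinuousOn F (Set.Icc 0 1) :=
    ((geg_continuous d n).mul hWcont).continuousOn
  have hderiv : ∀ x ∈ Set.Ioo (0:ℝ) 1, HasDerivWithinAt F (g x) (Set.Ioi x) x := by
    intro x hx
    obtain ⟨hx0, hx1⟩ := hx
    have hb : (0 : ℝ) < 1 - x ^ 2 := by nlinarith
    have hin : HasDerivAt (fun y : ℝ => 1 - y ^ 2) (-(2 * x)) x := by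
      simpa using ((hasDerivAt_pow 2 x).const_sub 1)
    have hrp : HasDerivAt (fun y : ℝ => y ^ (e + 1)) ((e + 1) * (1 - x ^ 2) ^ (e + 1 - 1))
        (1 - x ^ 2) := Real.hasDerivAt_rpow_const (Or.inl hb.ne')
    have hcomp : HasDerivAt (fun y : ℝ => (1 - y ^ 2) ^ (e + 1))
        ((e + 1) * (1 - x ^ 2) ^ (e + 1 - 1) * (-(2 * x))) x :=
        (hrp.comp x hin : HasDerivAt ((fun y : ℝ => y ^ (e + 1)) ∘ (fun y : ℝ => 1 - y ^ 2)) _ x)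
    have hmul : HasDerivAt F
        (dgeg d n x * (1 - x ^ 2) ^ (e + 1)
          + geg d n x * ((e + 1) * (1 - x ^ 2) ^ (e + 1 - 1) * (-(2 * x)))) x :=
      (geg_hasDerivAt d n x).mul hcomp
    have hval : dgeg d n x * (1 - x ^ 2) ^ (e + 1)
          + geg d n x * ((e + 1) * (1 - x ^ 2) ^ (e + 1 - 1) * (-(2 * x))) = g x := by
      have h1 : (1 - x ^ 2) ^ (e + 1) = (1 - x ^ 2) ^ e * (1 - x ^ 2) := by
        rw [Real.rpow_add hb, Real.rpow_one]
      have h2 : (e + 1 - 1 : ℝ) = e := by ring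
      rw [h1, h2, hg]
      have hid := geg_deriv_id d hd n x
      rw [he]
      linear_combination ((1 - x ^ 2) ^ e) * hid
    rw [← hval]
    exact hmul.hasDerivWithinAt
  have hgint : IntervalIntegrable g volume 0 1 := by
    have : Continuous (fun x : ℝ => (n : ℝ) * geg d (n - 1) x - ((d : ℝ) + n - 1)
        * (x * geg d n x)) := by
      exact (continuous_const.mul (geg_continuous d (n - 1))).sub
        (continuous_const.mul (continuous_id.mul (geg_continuous d n)))
    exact intW d hd _ this
  have hFTC : ∫ x in (0:ℝ)..1, g x = F 1 - F 0 :=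
    intervalIntegral.integral_eq_sub_of_hasDeriv_right_of_le (by norm_num) hFcont hderiv hgint
  have hF1 : F 1 = 0 := by
    show geg d n 1 * ((1 : ℝ) - 1 ^ 2) ^ (e + 1) = 0
    rw [show ((1 : ℝ) - 1 ^ 2) = 0 by norm_num, Real.zero_rpow hE, mul_zero]
  have hF0 : F 0 = geg d n 0 := by
    show geg d n 0 * ((1 : ℝ) - 0 ^ 2) ^ (e + 1) = geg d n 0
    rw [show ((1 : ℝ) - 0 ^ 2) = 1 by norm_num, Real.one_rpow, mul_one]
  have hsplit : ∫ x in (0:ℝ)..1, g x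
      = (n : ℝ) * (∫ x in (0:ℝ)..1, geg d (n - 1) x * (1 - x ^ 2) ^ e)
        - ((d : ℝ) + n - 1) * (∫ x in (0:ℝ)..1, x * geg d n x * (1 - x ^ 2) ^ e) := by
    have i1 : IntervalIntegrable (fun x => geg d (n - 1) x * (1 - x ^ 2) ^ e) volume 0 1 :=
      intW d hd _ (geg_continuous d (n - 1))
    have i2 : IntervalIntegrable (fun x => x * geg d n x * (1 - x ^ 2) ^ e) volume 0 1 :=
      intW d hd _ (continuous_id.mul (geg_continuous d n))
    have : ∫ x in (0:ℝ)..1, g x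
        = ∫ x in (0:ℝ)..1, ((n : ℝ) * (geg d (n - 1) x * (1 - x ^ 2) ^ e)
            - ((d : ℝ) + n - 1) * (x * geg d n x * (1 - x ^ 2) ^ e)) := by
      apply intervalIntegral.integral_congr
      intro x _
      rw [hg]; ring
    rw [this, intervalIntegral.integral_sub ((i1.const_mul _)) ((i2.const_mul _)),
      intervalIntegral.integral_const_mul, intervalIntegral.integral_const_mul]
  rw [← hsplit, hFTC, hF1, hF0]
  ring

noncomputable def II (d m : ℕ) : ℝ :=
  ∫ x in (0:ℝ)..1, geg d m x * (1 - x ^ 2) ^ (((d : ℝ) - 3) / 2)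

noncomputable def JJ (d m : ℕ) : ℝ :=
  ∫ x in (0:ℝ)..1, x * geg d m x * (1 - x ^ 2) ^ (((d : ℝ) - 3) / 2)

lemma ftc' (d : ℕ) (hd : 2 ≤ d) (n : ℕ) :
    (n : ℝ) * II d (n - 1) - ((d : ℝ) + n - 1) * JJ d n = -geg d n 0 :=
  key_ftc d hd n

lemma rec' (d : ℕ) (hd : 2 ≤ d) (m : ℕ) (hm : 1 ≤ m) :
    ((d : ℝ) + 2 * m - 2) * JJ d m
      = ((d : ℝ) + m - 2) * II d (m + 1) + (m : ℝ) * II d (m - 1) := by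
  have i1 : IntervalIntegrable
      (fun x => geg d (m + 1) x * (1 - x ^ 2) ^ (((d : ℝ) - 3) / 2)) volume 0 1 :=
    intW d hd _ (geg_continuous d (m + 1))
  have i2 : IntervalIntegrable
      (fun x => geg d (m - 1) x * (1 - x ^ 2) ^ (((d : ℝ) - 3) / 2)) volume 0 1 :=
    intW d hd _ (geg_continuous d (m - 1))
  have hcong : ((d : ℝ) + 2 * m - 2) * JJ d m
      = ∫ x in (0:ℝ)..1,
          (((d : ℝ) + m - 2) * (geg d (m + 1) x * (1 - x ^ 2) ^ (((d : ℝ) - 3) / 2))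
            + (m : ℝ) * (geg d (m - 1) x * (1 - x ^ 2) ^ (((d : ℝ) - 3) / 2))) := by
    rw [JJ, ← intervalIntegral.integral_const_mul]
    apply intervalIntegral.integral_congr
    intro x _
    have hrec := geg_rec d hd m hm x
    dsimp only
    linear_combination (-((1 - x ^ 2) ^ (((d : ℝ) - 3) / 2))) * hrec
  rw [hcong, intervalIntegral.integral_add (i1.const_mul _) (i2.const_mul _),
    intervalIntegral.integral_const_mul, intervalIntegral.integral_const_mul, II, II]

lemma geg_even_zero (d : ℕ) (hd : 2 ≤ d) :
    ∀ k : ℕ, geg d (2 * k) 0 * ∏ j ∈ Finset.range k, ((d : ℝ) + 2 * j - 1)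
      = (-1) ^ k * ((2 * k - 1)‼ : ℝ) := by
  have hd2 : (2 : ℝ) ≤ (d : ℝ) := by exact_mod_cast hd
  intro k
  induction k with
  | zero => simp [geg, Nat.doubleFactorial]
  | succ k ih =>
    have hne : ((d : ℝ) + 2 * k - 1) ≠ 0 := by nlinarith [Nat.cast_nonneg (α := ℝ) k]
    have hstep : geg d (2 * (k + 1)) 0 * ((d : ℝ) + 2 * k - 1)
        = -(2 * (k : ℝ) + 1) * geg d (2 * k) 0 := by
      have h := geg_rec d hd (2 * k + 1) (by omega) 0
      rw [show 2 * k + 1 + 1 = 2 * (k + 1) from by omega,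
        show 2 * k + 1 - 1 = 2 * k from by omega] at h
      push_cast at h
      linear_combination h
    have hdf : ((2 * (k + 1) - 1)‼ : ℝ) = (2 * (k : ℝ) + 1) * ((2 * k - 1)‼ : ℝ) := by
      rcases k with _ | k
      · norm_num [Nat.doubleFactorial]
      · rw [show 2 * (k + 1 + 1) - 1 = 2 * k + 1 + 2 from by omega,
          Nat.doubleFactorial_add_two, show 2 * (k + 1) - 1 = 2 * k + 1 from by omega]
        push_cast
        ring
    rw [Finset.prod_range_succ, hdf]
    have : geg d (2 * (k + 1)) 0 * ((∏ j ∈ Finset.range k, ((d : ℝ) + 2 * j - 1))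
        * ((d : ℝ) + 2 * k - 1))
        = (-(2 * (k : ℝ) + 1) * geg d (2 * k) 0) * ∏ j ∈ Finset.range k, ((d : ℝ) + 2 * j - 1) := by
      rw [← hstep]; ring
    rw [this]
    rw [show -(2 * (k : ℝ) + 1) * geg d (2 * k) 0 * ∏ j ∈ Finset.range k, ((d : ℝ) + 2 * j - 1)
        = -(2 * (k : ℝ) + 1) * (geg d (2 * k) 0 * ∏ j ∈ Finset.range k, ((d : ℝ) + 2 * j - 1))
        from by ring, ih]
    ring

lemma df_cast (k : ℕ) : ((2 * (k + 1) - 1)‼ : ℝ) = (2 * (k : ℝ) + 1) * ((2 * k - 1)‼ : ℝ) := by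
  rcases k with _ | k
  · norm_num [Nat.doubleFactorial]
  · rw [show 2 * (k + 1 + 1) - 1 = 2 * k + 1 + 2 from by omega,
      Nat.doubleFactorial_add_two, show 2 * (k + 1) - 1 = 2 * k + 1 from by omega]
    push_cast
    ring

lemma closedII (d : ℕ) (hd : 2 ≤ d) : ∀ k : ℕ,
    II d (2 * k + 1) * ∏ j ∈ Finset.range (k + 1), ((d : ℝ) + 2 * j - 1)
      = (-1) ^ k * ((2 * k - 1)‼ : ℝ) ∧
    (1 ≤ k → JJ d (2 * k) * ∏ j ∈ Finset.range (k + 1), ((d : ℝ) + 2 * j - 1)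
      = (-1) ^ (k + 1) * ((2 * k - 3)‼ : ℝ)) := by
  have hd2 : (2 : ℝ) ≤ (d : ℝ) := by exact_mod_cast hd
  have II1 : II d 1 = JJ d 0 := by
    rw [II, JJ]
    apply intervalIntegral.integral_congr
    intro x _
    simp [geg]
  have hftc0 : ((d : ℝ) - 1) * JJ d 0 = 1 := by
    have h := ftc' d hd 0
    have hg : geg d 0 0 = 1 := rfl
    rw [hg] at h
    push_cast at h
    linarith
  intro k
  induction k with
  | zero =>
    constructor
    · rw [show 2 * 0 + 1 = 1 from rfl, II1, Finset.prod_range_one]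
      norm_num [Nat.doubleFactorial]
      linarith
    · intro h; exact absurd h (by norm_num)
  | succ k ih =>
    have h1 := ih.1
    have hne : ((d : ℝ) + 2 * k) ≠ 0 := by nlinarith [Nat.cast_nonneg (α := ℝ) k]
    have h2 := geg_even_zero d hd (k + 1)
    rw [df_cast, show 2 * (k + 1) = 2 * k + 2 from by omega] at h2
    have h3 := ftc' d hd (2 * k + 2)
    rw [show 2 * k + 2 - 1 = 2 * k + 1 from by omega] at h3
    push_cast at h3
    have h4 := rec' d hd (2 * k + 2) (by omega)
    rw [show 2 * k + 2 + 1 = 2 * (k + 1) + 1 from by omega,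
      show 2 * k + 2 - 1 = 2 * k + 1 from by omega] at h4
    push_cast at h4
    constructor
    · rw [df_cast, Finset.prod_range_succ]
      push_cast
      apply mul_left_cancel₀ hne
      linear_combination
        (-((∏ j ∈ Finset.range (k + 1), ((d : ℝ) + 2 * j - 1)) * ((d : ℝ) + 2 * k + 1))) * h4
        + (-((∏ j ∈ Finset.range (k + 1), ((d : ℝ) + 2 * j - 1)) * ((d : ℝ) + 4 * k + 2))) * h3
        + ((2 * (k : ℝ) + 2) * (2 * (k : ℝ) + 1)) * h1
        + ((d : ℝ) + 4 * (k : ℝ) + 2) * h2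
    · intro _
      rw [show 2 * (k + 1) - 3 = 2 * k - 1 from by omega, show 2 * (k + 1) = 2 * k + 2 from by omega,
        Finset.prod_range_succ]
      push_cast
      linear_combination (-(∏ j ∈ Finset.range (k + 1), ((d : ℝ) + 2 * j - 1))) * h3
        + (2 * (k : ℝ) + 2) * h1 + h2

/-- `A_0 = Z_d/(d-1)`, `A_{2k} = (-1)^{k+1} Z_d (2k-3)!!/∏_{j=0}^{k}(d+2j-1)` for
`k ≥ 1`, and `B_{2k+1} = (-1)^k Z_d (2k-1)!!/∏_{j=0}^{k}(d+2j-1)` for `k ≥ 0`. -/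
theorem stmt12 (d : ℕ) (hd : 2 ≤ d) :
    Ageg d 0 = Zc d / ((d : ℝ) - 1) ∧
    (∀ k : ℕ, 1 ≤ k →
      Ageg d k
        = (-1) ^ (k + 1) * Zc d * ((2 * k - 3)‼ : ℝ)
            / ∏ j ∈ Finset.range (k + 1), ((d : ℝ) + 2 * j - 1)) ∧
    (∀ k : ℕ,
      Bgeg d k
        = (-1) ^ k * Zc d * ((2 * k - 1)‼ : ℝ)
            / ∏ j ∈ Finset.range (k + 1), ((d : ℝ) + 2 * j - 1)) := by
  have hd2 : (2 : ℝ) ≤ (d : ℝ) := by exact_mod_cast hd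
  have hAeq : ∀ k : ℕ, Ageg d k = Zc d * JJ d (2 * k) := by
    intro k
    rw [Ageg, JJ, ← intervalIntegral.integral_const_mul]
    apply intervalIntegral.integral_congr
    intro x _
    dsimp only
    ring
  have hBeq : ∀ k : ℕ, Bgeg d k = Zc d * II d (2 * k + 1) := by
    intro k
    rw [Bgeg, II, ← intervalIntegral.integral_const_mul]
    apply intervalIntegral.integral_congr
    intro x _
    dsimp only
    ring
  have hprodne : ∀ k : ℕ, (∏ j ∈ Finset.range (k + 1), ((d : ℝ) + 2 * j - 1)) ≠ 0 := by
    intro k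
    apply Finset.prod_ne_zero_iff.mpr
    intro j _
    nlinarith [Nat.cast_nonneg (α := ℝ) j]
  have hftc0 : ((d : ℝ) - 1) * JJ d 0 = 1 := by
    have h := ftc' d hd 0
    have hg : geg d 0 0 = 1 := rfl
    rw [hg] at h
    push_cast at h
    linarith
  refine ⟨?_, ?_, ?_⟩
  · rw [hAeq 0, eq_div_iff (by intro h; nlinarith : ((d : ℝ) - 1) ≠ 0)]
    show Zc d * JJ d (2 * 0) * ((d : ℝ) - 1) = Zc d
    rw [show 2 * 0 = 0 from rfl]
    linear_combination Zc d * hftc0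
  · intro k hk
    have hJ := (closedII d hd k).2 hk
    rw [hAeq k, eq_div_iff (hprodne k)]
    linear_combination Zc d * hJ
  · intro k
    have hI := (closedII d hd k).1
    rw [hBeq k, eq_div_iff (hprodne k)]
    linear_combination Zc d * hI
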